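/- arXiv:2303.13990 — 2 statements merged into one kernel-verified Lean document; each statement's English description precedes it below -/
import Mathlib

section
/- Let (R, μ) be a σ-finite nonatomic measure space, let f ≥ 0 be a μ-measurable function on R, and set T = ess sup_{x ∈ R} f(x). If there exists a measure-preserving transformation σ : R → (0, μ(R)) such that f = f_* ∘ σ μ-almost everywhere in R, then either (i) κ_f(T) < ∞, or (ii) κ_f(s) < ∞ for every s ∈ (0, T) and μ({x ∈ R : f(x) = T}) = 0. Equivalently, if neither (i) nor (ii) holds, then no map σ : R → (0, ∞) satisfies f = f_* ∘ σ μ-a.e. -/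
open MeasureTheory Set Filter Topology ENNReal

variable {α : Type*} [MeasurableSpace α]

/-- A measure is *nonatomic* if every set of positive measure contains a measurable subset
of strictly smaller, positive measure. -/
def Nonatomic (μ : Measure α) : Prop :=
  ∀ E : Set α, MeasurableSet E → 0 < μ E → ∃ F, F ⊆ E ∧ MeasurableSet F ∧ 0 < μ F ∧ μ F < μ E

/-- The lower distribution function `κ_f(s) = μ {x : |f x| < s}`. -/
noncomputable def lowerDistrib (μ : Measure α) (f : α → ℝ) (s : ℝ) : ℝ≥0∞ :=
  μ {x | |f x| < s}

/-- The nondecreasing rearrangement `f_*(t) = sup {s > 0 : κ_f(s) < t}` (with `sup ∅ = 0`). -/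
noncomputable def ndRearr (μ : Measure α) (f : α → ℝ) (t : ℝ) : ℝ≥0∞ :=
  sSup {y : ℝ≥0∞ | ∃ s : ℝ, 0 < s ∧ lowerDistrib μ f s < ENNReal.ofReal t ∧ y = ENNReal.ofReal s}

/-- The distribution function `μ_f(s) = μ {x : |f x| > s}`. -/
noncomputable def distrib (μ : Measure α) (f : α → ℝ) (s : ℝ) : ℝ≥0∞ :=
  μ {x | s < |f x|}

/-- The nonincreasing rearrangement `f^*(t) = inf {s > 0 : μ_f(s) ≤ t}` (with `inf ∅ = ∞`). -/
noncomputable def niRearr (μ : Measure α) (f : α → ℝ) (t : ℝ) : ℝ≥0∞ :=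
  sInf {y : ℝ≥0∞ | ∃ s : ℝ, 0 < s ∧ distrib μ f s ≤ ENNReal.ofReal t ∧ y = ENNReal.ofReal s}

/-- The lower distribution function with extended-real argument (for `f ≥ 0`),
`κ_f(s) = μ {x : f x < s}`, `s ∈ (0, ∞]`. -/
noncomputable def elowerDistrib (μ : Measure α) (f : α → ℝ) (s : ℝ≥0∞) : ℝ≥0∞ :=
  μ {x | ENNReal.ofReal (f x) < s}


lemma ndRearr_mono (μ : Measure α) (f : α → ℝ) : Monotone (ndRearr μ f) := by
  intro t t' htt'
  apply sSup_le_sSup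
  rintro y ⟨s, hs, hls, rfl⟩
  exact ⟨s, hs, hls.trans_le (ENNReal.ofReal_le_ofReal htt'), rfl⟩

/-- (Ryff-type theorem, necessity.) Let `f ≥ 0` and `T = ess sup f`. If there is a
measure-preserving transformation `σ : R → (0, μ(R))` with `f = f_* ∘ σ` μ-a.e., then either
(i) `κ_f(T) < ∞`, or (ii) `κ_f(s) < ∞` for all `s ∈ (0, T)` and `μ {f = T} = 0`. -/
theorem cond_of_exists_measurePreserving_ndRearr
    (μ : Measure α) [SigmaFinite μ] (hμ : Nonatomic μ)
    (f : α → ℝ) (hf : Measurable f) (hf0 : 0 ≤ f)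
    (hσ : ∃ σ : α → ℝ,
      MeasurePreserving σ μ
        (volume.restrict {t : ℝ | 0 < t ∧ ENNReal.ofReal t < μ univ}) ∧
      ∀ᵐ x ∂μ, ENNReal.ofReal (f x) = ndRearr μ f (σ x)) :
    elowerDistrib μ f (essSup (fun x => ENNReal.ofReal (f x)) μ) < ∞ ∨
      ((∀ s : ℝ≥0∞, 0 < s → s < essSup (fun x => ENNReal.ofReal (f x)) μ →
          elowerDistrib μ f s < ∞) ∧
        μ {x | ENNReal.ofReal (f x) = essSup (fun x => ENNReal.ofReal (f x)) μ} = 0) := by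

  obtain ⟨σ, hmp, hae⟩ := hσ
  set g : α → ℝ≥0∞ := fun x => ENNReal.ofReal (f x) with hg
  set T := essSup g μ with hT
  set S : Set ℝ := {t : ℝ | 0 < t ∧ ENNReal.ofReal t < μ univ} with hSdef
  have hS : MeasurableSet S :=
    measurableSet_Ioi.inter (ENNReal.measurable_ofReal measurableSet_Iio)
  have haeS : ∀ᵐ x ∂μ, σ x ∈ S := by
    have h0 : μ (σ ⁻¹' Sᶜ) = 0 := by
      rw [hmp.measure_preimage hS.compl.nullMeasurableSet,
        Measure.restrict_apply hS.compl]
      simp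
    rw [ae_iff]
    exact h0
  have hmono := ndRearr_mono μ f
  have key : ∀ s : ℝ≥0∞, μ {x | g x < s} = ∞ → ∀ᵐ x ∂μ, g x < s := by
    intro s hs
    set E : Set ℝ := {t | 0 < t ∧ ndRearr μ f t < s} with hE
    have hEm : MeasurableSet E :=
      measurableSet_Ioi.inter (hmono.measurable measurableSet_Iio)
    have haeq : {x | g x < s} =ᵐ[μ] σ ⁻¹' E := by
      filter_upwards [hae, haeS] with x h1 h2
      simp only [eq_iff_iff, Set.mem_setOf_eq, Set.mem_preimage, hE]
      constructor
      · intro h; exact ⟨h2.1, h1 ▸ h⟩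
      · intro h
        show ENNReal.ofReal (f x) < s
        rw [h1]; exact h.2
    have hvol : volume (E ∩ S) = ∞ := by
      have hc := measure_congr haeq
      rw [hc, hmp.measure_preimage hEm.nullMeasurableSet,
        Measure.restrict_apply hEm] at hs
      exact hs
    have hall : ∀ t : ℝ, 0 < t → ndRearr μ f t < s := by
      intro t ht
      by_contra hcon
      push_neg at hcon
      have hsub : E ∩ S ⊆ Set.Ioo 0 t := by
        rintro u ⟨⟨hu0, hus⟩, -⟩
        refine ⟨hu0, ?_⟩
        by_contra hut
        push_neg at hut
        exact absurd (lt_of_le_of_lt (hcon.trans (hmono hut)) hus) (lt_irrefl _)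
      have hlt : volume (E ∩ S) < ∞ := by
        refine (measure_mono hsub).trans_lt ?_
        rw [Real.volume_Ioo]
        exact ENNReal.ofReal_lt_top
      rw [hvol] at hlt
      exact absurd hlt (lt_irrefl _)
    filter_upwards [hae, haeS] with x h1 h2
    calc g x = ndRearr μ f (σ x) := h1
    _ < s := hall _ h2.1
  by_cases hT1 : elowerDistrib μ f T < ∞
  · exact Or.inl hT1
  · right
    have hTinf : μ {x | g x < T} = ∞ := top_le_iff.mp (not_lt.mp hT1)
    have haeT : ∀ᵐ x ∂μ, g x < T := key T hTinf
    constructor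
    · intro s hs0 hsT
      by_contra hfin
      have hinf : μ {x | g x < s} = ∞ := top_le_iff.mp (not_lt.mp hfin)
      have hle : T ≤ s := essSup_le_of_ae_le s ((key s hinf).mono fun x hx => hx.le)
      exact absurd (hle.trans_lt hsT) (lt_irrefl _)
    · refine measure_mono_null (fun x hx => ?_) (ae_iff.mp haeT)
      simp only [Set.mem_setOf_eq] at hx ⊢
      have hgx : g x = T := hx
      rw [hgx]
      exact lt_irrefl _
end

section
/- Let μ, ν be nonatomic σ-finite measures on R over the same σ-algebra and let p ∈ [1, ∞). Suppose μ is absolutely continuous with respect to ν and A := sup_{E ⊂ R, μ(E) ≤ 1} ( ∫_E (dμ/dν)^{p'} dν )^{1/p'} < ∞ (supremum over μ-measurable sets E with μ(E) ≤ 1; usual modification for p = 1). Then for every ν-measurable function f with ∫_R |f|^p dν < ∞, one has ∫_0^{min{μ(R),1}} f^*(t) dt ≤ A (∫_R |f|^p dν)^{1/p}, where f^* is the nonincreasing rearrangement of f with respect to μ; moreover, A is the optimal (smallest) such constant. -/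
open MeasureTheory Set Filter Topology ENNReal

variable {α : Type*} [MeasurableSpace α]

/-- `A = sup { ‖dμ/dν‖_{L^q(E, ν)} : μ(E) ≤ 1 }`. -/
noncomputable def Aconst (μ ν : Measure α) (q : ℝ≥0∞) : ℝ≥0∞ :=
  ⨆ (E : Set α) (_ : MeasurableSet E) (_ : μ E ≤ 1),
    eLpNorm (fun x => (μ.rnDeriv ν x).toReal) q (ν.restrict E)



private lemma ennreal_div_pow_succ (a : ℝ≥0∞) (n : ℕ) : a / 2 ^ (n+1) = a / 2 ^ n / 2 := by
  rw [pow_succ, div_eq_mul_inv, div_eq_mul_inv, div_eq_mul_inv, mul_assoc, ENNReal.mul_inv] <;>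
    simp

/-- small positive subsets -/
lemma Nonatomic.exists_small {μ : Measure α} (hna : Nonatomic μ) {B : Set α}
    (hB : MeasurableSet B) (hB0 : 0 < μ B) {ε : ℝ≥0∞} (hε : 0 < ε) :
    ∃ F, F ⊆ B ∧ MeasurableSet F ∧ 0 < μ F ∧ μ F ≤ ε := by
  -- reduce to finite measure
  obtain ⟨B, hBsub, hB, hB0, hBfin⟩ :
      ∃ B', B' ⊆ B ∧ MeasurableSet B' ∧ 0 < μ B' ∧ μ B' < ∞ := by
    rcases eq_or_ne (μ B) ∞ with h | h
    · obtain ⟨F, hFB, hFm, hF0, hFlt⟩ := hna B hB hB0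
      exact ⟨F, hFB, hFm, hF0, h ▸ hFlt⟩
    · exact ⟨B, Subset.rfl, hB, hB0, h.lt_top⟩
  -- iterate halving
  have key : ∀ n : ℕ, ∃ F, F ⊆ B ∧ MeasurableSet F ∧ 0 < μ F ∧ μ F ≤ μ B / 2 ^ n := by
    intro n
    induction n with
    | zero => exact ⟨B, Subset.rfl, hB, hB0, by simp⟩
    | succ n ih =>
      obtain ⟨F, hFB, hFm, hF0, hFle⟩ := ih
      obtain ⟨G, hGF, hGm, hG0, hGlt⟩ := hna F hFm hF0
      have hFfin : μ F ≠ ∞ := (hFle.trans_lt (ENNReal.div_lt_top hBfin.ne (by positivity))).ne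
      have hdiff : μ (F \ G) = μ F - μ G := measure_diff hGF hGm.nullMeasurableSet (hGlt.trans_le le_top).ne
      rcases le_total (μ G) (μ F / 2) with h | h
      · refine ⟨G, hGF.trans hFB, hGm, hG0, h.trans ?_⟩
        rw [ennreal_div_pow_succ]
        exact ENNReal.div_le_div_right hFle 2
      · refine ⟨F \ G, (diff_subset).trans hFB, hFm.diff hGm, ?_, ?_⟩
        · rw [hdiff]
          exact tsub_pos_of_lt hGlt
        · rw [hdiff]
          calc μ F - μ G ≤ μ F - μ F / 2 := tsub_le_tsub_left h _
          _ ≤ μ F / 2 := by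
              rw [tsub_le_iff_right, ENNReal.add_halves]
          _ ≤ μ B / 2 ^ (n+1) := by
              rw [ennreal_div_pow_succ]
              exact ENNReal.div_le_div_right hFle 2
  obtain ⟨n, hn⟩ : ∃ n : ℕ, μ B / 2 ^ n ≤ ε := by
    have hq : (0:ℝ≥0∞) < ε / μ B := ENNReal.div_pos hε.ne' hBfin.ne
    obtain ⟨n, hn⟩ := ENNReal.exists_inv_two_pow_lt hq.ne'
    refine ⟨n, ?_⟩
    have h2 : μ B / 2^n = μ B * 2⁻¹ ^ n := by rw [div_eq_mul_inv, ENNReal.inv_pow]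
    rw [h2]
    calc μ B * 2⁻¹^n ≤ μ B * (ε / μ B) := mul_le_mul_right hn.le _
    _ = ε := ENNReal.mul_div_cancel hB0.ne' hBfin.ne
  obtain ⟨F, h1, h2, h3, h4⟩ := key n
  exact ⟨F, h1.trans hBsub, h2, h3, h4.trans hn⟩

/-- Sierpinski: nonatomic sigma-finite measures attain every value. -/
lemma Nonatomic.exists_subset_measure_eq {μ : Measure α} [SigmaFinite μ] (hna : Nonatomic μ)
    {B : Set α} (hB : MeasurableSet B) {r : ℝ≥0∞} (hr : r ≤ μ B) :
    ∃ F, F ⊆ B ∧ MeasurableSet F ∧ μ F = r := by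
  classical
  rcases hr.eq_or_lt with h | hlt
  · exact ⟨B, Subset.rfl, hB, h.symm⟩
  have hrtop : r ≠ ∞ := (hlt.trans_le le_top).ne
  rcases eq_or_ne r 0 with rfl | hr0
  · exact ⟨∅, empty_subset _, MeasurableSet.empty, measure_empty⟩
  -- reduce to finite measure
  obtain ⟨B', hB', hB'sub, hrB', hB'fin⟩ := Measure.exists_subset_measure_lt_top hB hlt
  clear hlt hr hB
  -- greedy construction inside B'
  have step : ∀ S : Set α, MeasurableSet S → μ S ≤ r →
      ∃ G, MeasurableSet G ∧ G ⊆ B' \ S ∧ μ S + μ G ≤ r ∧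
        ∀ G', MeasurableSet G' → G' ⊆ B' \ S → μ S + μ G' ≤ r → μ G' ≤ 2 * μ G := by
    intro S hS hSr
    set σ := ⨆ (T : Set α) (_ : MeasurableSet T) (_ : T ⊆ B' \ S) (_ : μ S + μ T ≤ r), μ T with hσ
    have hσle : σ ≤ r := by
      refine iSup_le fun T => iSup_le fun hT => iSup_le fun hTsub => iSup_le fun hTr => ?_
      exact le_trans le_add_self hTr
    rcases eq_or_ne σ 0 with hσ0 | hσ0
    · refine ⟨∅, MeasurableSet.empty, empty_subset _, by simpa using hSr, ?_⟩
      intro G' hG' hG'sub hG'r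
      have : μ G' ≤ σ := by
        rw [hσ]
        exact le_iSup₂_of_le G' hG' (le_iSup₂_of_le hG'sub hG'r le_rfl)
      simpa [hσ0] using this
    · have hσfin : σ < ∞ := hσle.trans_lt hrtop.lt_top
      have hhalf : σ / 2 < σ := ENNReal.half_lt_self hσ0 hσfin.ne
      obtain ⟨G, hGm, hGsub, hGr, hGgt⟩ :
          ∃ G, MeasurableSet G ∧ G ⊆ B' \ S ∧ μ S + μ G ≤ r ∧ σ / 2 < μ G := by
        by_contra hcon
        push_neg at hcon
        have : σ ≤ σ / 2 := by
          rw [hσ]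
          refine iSup_le fun T => iSup_le fun hT => iSup_le fun hTsub => iSup_le fun hTr => ?_
          exact hcon T hT hTsub hTr
        exact absurd this (not_le.mpr hhalf)
      refine ⟨G, hGm, hGsub, hGr, ?_⟩
      intro G' hG' hG'sub hG'r
      have h1 : μ G' ≤ σ :=
        le_iSup₂_of_le G' hG' (le_iSup₂_of_le hG'sub hG'r le_rfl)
      calc μ G' ≤ σ := h1
      _ = 2 * (σ / 2) := by rw [ENNReal.mul_div_cancel] <;> simp
      _ ≤ 2 * μ G := by exact mul_le_mul_right hGgt.le 2
  choose! G hGm hGsub hGr hGmax using step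
  set A : ℕ → Set α := fun n => Nat.rec ∅ (fun _ S => S ∪ G S) n with hA
  have hA0 : A 0 = ∅ := rfl
  have hAsucc : ∀ n, A (n + 1) = A n ∪ G (A n) := fun n => rfl
  have hinv : ∀ n, MeasurableSet (A n) ∧ A n ⊆ B' ∧ μ (A n) ≤ r := by
    intro n
    induction n with
    | zero => simp [hA0]
    | succ n ih =>
      obtain ⟨h1, h2, h3⟩ := ih
      refine ⟨h1.union (hGm _ h1 h3), union_subset h2 ((hGsub _ h1 h3).trans diff_subset), ?_⟩
      rw [hAsucc]
      calc μ (A n ∪ G (A n)) ≤ μ (A n) + μ (G (A n)) := measure_union_le _ _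
      _ ≤ r := hGr _ h1 h3
  have hAmeas : ∀ n, MeasurableSet (A n) := fun n => (hinv n).1
  have hAsubB : ∀ n, A n ⊆ B' := fun n => (hinv n).2.1
  have hAr : ∀ n, μ (A n) ≤ r := fun n => (hinv n).2.2
  have hmono : Monotone A := by
    refine monotone_nat_of_le_succ fun n => ?_
    rw [hAsucc]; exact subset_union_left
  set Ainf := ⋃ n, A n with hAinf
  have hAinfm : MeasurableSet Ainf := MeasurableSet.iUnion hAmeas
  have hAinfsub : Ainf ⊆ B' := iUnion_subset hAsubB
  have hAinfr : μ Ainf ≤ r := by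
    rw [hAinf, hmono.measure_iUnion]
    exact iSup_le hAr
  rcases hAinfr.eq_or_lt with heq | hltr
  · exact ⟨Ainf, hAinfsub.trans hB'sub, hAinfm, heq⟩
  exfalso
  have hC0 : 0 < μ (B' \ Ainf) := by
    by_contra hc
    push_neg at hc
    have hc0 : μ (B' \ Ainf) = 0 := le_antisymm (by simpa using hc) zero_le
    have : μ B' ≤ μ Ainf := by
      calc μ B' ≤ μ (Ainf ∪ (B' \ Ainf)) := measure_mono (by intro x hx; by_cases h : x ∈ Ainf <;> simp [h, hx])
      _ ≤ μ Ainf + μ (B' \ Ainf) := measure_union_le _ _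
      _ = μ Ainf := by rw [hc0, add_zero]
    exact absurd (this.trans_lt hltr) (not_lt.mpr hrB'.le)
  obtain ⟨Gd, hGdsub, hGdm, hGd0, hGdle⟩ :=
    hna.exists_small (hB'.diff hAinfm) hC0 (tsub_pos_of_lt hltr)
  have hkey : ∀ n, μ Gd / 2 ≤ μ (G (A n)) := by
    intro n
    have h1 : Gd ⊆ B' \ A n := hGdsub.trans (diff_subset_diff_right (subset_iUnion A n))
    have h2 : μ (A n) + μ Gd ≤ r := by
      calc μ (A n) + μ Gd ≤ μ Ainf + (r - μ Ainf) := by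
            refine add_le_add (measure_mono (subset_iUnion A n)) hGdle
      _ = r := add_tsub_cancel_of_le hltr.le
    have := hGmax (A n) (hAmeas n) (hAr n) Gd hGdm h1 h2
    rw [ENNReal.div_le_iff_le_mul (by simp) (by simp)]
    calc μ Gd ≤ 2 * μ (G (A n)) := this
    _ = μ (G (A n)) * 2 := mul_comm _ _
  have hgrow : ∀ n : ℕ, (n : ℝ≥0∞) * (μ Gd / 2) ≤ μ (A n) := by
    intro n
    induction n with
    | zero => simp
    | succ n ih =>
      have hdisj : Disjoint (A n) (G (A n)) :=
        disjoint_sdiff_right.mono_right (hGsub _ (hAmeas n) (hAr n))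
      have : μ (A (n + 1)) = μ (A n) + μ (G (A n)) := by
        rw [hAsucc, measure_union hdisj (hGm _ (hAmeas n) (hAr n))]
      rw [this]
      push_cast
      rw [add_mul, one_mul]
      exact add_le_add ih (hkey n)
  have hhalfpos : 0 < μ Gd / 2 := ENNReal.div_pos hGd0.ne' (by simp)
  have hfin : r / (μ Gd / 2) < ∞ := ENNReal.div_lt_top hrtop hhalfpos.ne'
  obtain ⟨n, hn⟩ := ENNReal.exists_nat_gt hfin.ne
  have : (n : ℝ≥0∞) * (μ Gd / 2) ≤ r := (hgrow n).trans (hAr n)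
  have hbne : μ Gd / 2 ≠ ∞ :=
    (ENNReal.div_lt_top (hGdle.trans_lt (tsub_le_self.trans_lt hrtop.lt_top)).ne (by simp)).ne
  rw [← ENNReal.le_div_iff_mul_le (Or.inl hhalfpos.ne') (Or.inl hbne)] at this
  exact absurd this (not_le.mpr hn)

lemma distrib_antitone (μ : Measure α) (f : α → ℝ) : Antitone (distrib μ f) :=
  fun s u hsu => measure_mono fun x hx => lt_of_le_of_lt hsu hx

lemma distrib_measurable (μ : Measure α) (f : α → ℝ) : Measurable (distrib μ f) :=
  (distrib_antitone μ f).measurable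

/-- volume of `{t | 0 < t ∧ ofReal t < a}` is `a` for finite `a`. -/
lemma volume_aux {a : ℝ≥0∞} (ha : a ≠ ∞) :
    volume {t : ℝ | 0 < t ∧ ENNReal.ofReal t < a} = a := by
  have : {t : ℝ | 0 < t ∧ ENNReal.ofReal t < a} = Ioo 0 a.toReal := by
    ext t
    simp only [mem_setOf_eq, mem_Ioo]
    constructor
    · rintro ⟨ht, hlt⟩
      exact ⟨ht, (ENNReal.ofReal_lt_iff_lt_toReal ht.le ha).mp hlt⟩
    · rintro ⟨ht, hlt⟩
      exact ⟨ht, (ENNReal.ofReal_lt_iff_lt_toReal ht.le ha).mpr hlt⟩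
  rw [this, Real.volume_Ioo, sub_zero, ENNReal.ofReal_toReal ha]

/-- `niRearr` as the volume of a superlevel set of the distribution function. -/
lemma niRearr_eq_volume (μ : Measure α) (f : α → ℝ) (t : ℝ) :
    niRearr μ f t = volume {s : ℝ | 0 < s ∧ ENNReal.ofReal t < distrib μ f s} := by
  classical
  set U : Set ℝ := {s | 0 < s ∧ distrib μ f s ≤ ENNReal.ofReal t} with hU
  set V : Set ℝ := {s | 0 < s ∧ ENNReal.ofReal t < distrib μ f s} with hV
  have hset : {y : ℝ≥0∞ | ∃ s : ℝ, 0 < s ∧ distrib μ f s ≤ ENNReal.ofReal t ∧ y = ENNReal.ofReal s}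
      = ENNReal.ofReal '' U := by
    ext y
    simp only [hU, mem_setOf_eq, mem_image]
    constructor
    · rintro ⟨s, h1, h2, h3⟩; exact ⟨s, ⟨h1, h2⟩, h3.symm⟩
    · rintro ⟨s, ⟨h1, h2⟩, h3⟩; exact ⟨s, h1, h2, h3.symm⟩
  rcases eq_empty_or_nonempty U with hUe | hUne
  · have hVeq : V = Ioi 0 := by
      ext s
      simp only [hV, mem_setOf_eq, mem_Ioi]
      refine ⟨fun h => h.1, fun h => ⟨h, ?_⟩⟩
      have hnot : s ∉ U := hUe ▸ notMem_empty s
      by_contra hcon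
      push_neg at hcon
      exact hnot ⟨h, hcon⟩
    rw [niRearr, hset, hUe, image_empty, sInf_empty, hVeq, Real.volume_Ioi]
  · have hbdd : BddBelow U := ⟨0, fun s hs => hs.1.le⟩
    set c := sInf U with hc
    have hc0 : 0 ≤ c := le_csInf hUne fun s hs => hs.1.le
    -- V is squeezed between Ioo 0 c and Ioc 0 c
    have hsub1 : Ioo 0 c ⊆ V := by
      intro s hs
      refine ⟨hs.1, ?_⟩
      by_contra hcon
      push_neg at hcon
      exact absurd (csInf_le hbdd (⟨hs.1, hcon⟩ : s ∈ U)) (not_le.mpr hs.2)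
    have hsub2 : V ⊆ Ioc 0 c := by
      intro s hs
      refine ⟨hs.1, ?_⟩
      by_contra hcon
      push_neg at hcon
      obtain ⟨u, hu, hus⟩ := (csInf_lt_iff hbdd hUne).mp hcon
      exact absurd ((distrib_antitone μ f hus.le).trans hu.2) (not_le.mpr hs.2)
    have hvol : volume V = ENNReal.ofReal c := by
      refine le_antisymm ?_ ?_
      · calc volume V ≤ volume (Ioc 0 c) := measure_mono hsub2
        _ = ENNReal.ofReal c := by rw [Real.volume_Ioc, sub_zero]
      · calc ENNReal.ofReal c = volume (Ioo 0 c) := by rw [Real.volume_Ioo, sub_zero]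
        _ ≤ volume V := measure_mono hsub1
    rw [niRearr, hset, hvol]
    refine le_antisymm ?_ ?_
    · refine ENNReal.le_of_forall_pos_le_add fun ε hε _ => ?_
      obtain ⟨u, hu, hus⟩ := (csInf_lt_iff hbdd hUne).mp
        (lt_add_of_pos_right c (by exact_mod_cast hε))
      calc sInf (ENNReal.ofReal '' U) ≤ ENNReal.ofReal u := sInf_le ⟨u, hu, rfl⟩
      _ ≤ ENNReal.ofReal (c + (ε : ℝ)) := ENNReal.ofReal_le_ofReal hus.le
      _ = ENNReal.ofReal c + ε := by
          rw [ENNReal.ofReal_add hc0 ε.coe_nonneg, ENNReal.ofReal_coe_nnreal]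
    · refine le_sInf ?_
      rintro y ⟨s, hs, rfl⟩
      exact ENNReal.ofReal_le_ofReal (csInf_le hbdd hs)

lemma measurableSet_T (μ : Measure α) :
    MeasurableSet {t : ℝ | 0 < t ∧ ENNReal.ofReal t < min (μ univ) 1} := by
  have : {t : ℝ | 0 < t ∧ ENNReal.ofReal t < min (μ univ) 1}
      = Ioi 0 ∩ ENNReal.ofReal ⁻¹' (Iio (min (μ univ) 1)) := rfl
  rw [this]
  exact measurableSet_Ioi.inter (ENNReal.measurable_ofReal measurableSet_Iio)

/-- Tonelli identity: the integral of the nonincreasing rearrangement over `(0, m)` equals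
the integral of `min m (distrib)` over `(0, ∞)`. -/
lemma lintegral_niRearr_eq (μ : Measure α) (f : α → ℝ) :
    ∫⁻ t in {t : ℝ | 0 < t ∧ ENNReal.ofReal t < min (μ univ) 1}, niRearr μ f t
      = ∫⁻ s in Ioi (0:ℝ), min (min (μ univ) 1) (distrib μ f s) := by
  classical
  set m := min (μ univ) 1 with hm
  have hm1 : m ≤ 1 := min_le_right _ _
  have hmtop : m ≠ ∞ := (hm1.trans_lt (by norm_num)).ne
  set T := {t : ℝ | 0 < t ∧ ENNReal.ofReal t < m} with hT
  have hTm : MeasurableSet T := measurableSet_T μ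
  set D := distrib μ f with hD
  have hDm : Measurable D := distrib_measurable μ f
  set W : Set (ℝ × ℝ) := {p | 0 < p.2 ∧ ENNReal.ofReal p.1 < D p.2} with hW
  have hWm : MeasurableSet W := by
    have h1 : MeasurableSet {p : ℝ × ℝ | 0 < p.2} :=
      measurable_snd measurableSet_Ioi
    have h2 : MeasurableSet {p : ℝ × ℝ | ENNReal.ofReal p.1 < D p.2} :=
      measurableSet_lt (ENNReal.measurable_ofReal.comp measurable_fst)
        (hDm.comp measurable_snd)
    exact h1.inter h2
  set G : ℝ × ℝ → ℝ≥0∞ := W.indicator 1 with hG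
  have hGm : Measurable G := (measurable_one).indicator hWm
  -- step 1: niRearr as inner integral
  have step1 : ∀ t : ℝ, niRearr μ f t = ∫⁻ s, G (t, s) := by
    intro t
    rw [niRearr_eq_volume]
    have hsec : MeasurableSet {s : ℝ | (t, s) ∈ W} :=
      hWm.preimage (measurable_prodMk_left)
    have heq : (fun s => G (t, s)) = ({s : ℝ | (t, s) ∈ W}).indicator 1 := by
      funext s
      by_cases h : (t, s) ∈ W <;> simp [hG, h, indicator_apply]
    calc volume {s : ℝ | 0 < s ∧ ENNReal.ofReal t < distrib μ f s}
        = volume {s : ℝ | (t, s) ∈ W} := rfl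
    _ = ∫⁻ s, ({s : ℝ | (t, s) ∈ W}).indicator 1 s := (lintegral_indicator_one hsec).symm
    _ = ∫⁻ s, G (t, s) := by rw [heq]
  -- step 2: swap
  have swap : ∫⁻ t in T, ∫⁻ s, G (t, s) ∂volume ∂volume
      = ∫⁻ s, ∫⁻ t in T, G (t, s) ∂volume ∂volume := by
    apply lintegral_lintegral_swap
    exact (hGm.comp (measurable_fst.prodMk measurable_snd)).aemeasurable
  -- step 3: inner integral computation
  have step3 : ∀ s : ℝ, ∫⁻ t in T, G (t, s) ∂volume
      = (Ioi (0:ℝ)).indicator (fun s => min m (D s)) s := by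
    intro s
    by_cases hs : 0 < s
    · have hset : MeasurableSet {t : ℝ | ENNReal.ofReal t < D s} :=
        ENNReal.measurable_ofReal measurableSet_Iio
      have hfun : (fun t => G (t, s)) = ({t : ℝ | ENNReal.ofReal t < D s}).indicator 1 := by
        funext t
        by_cases h : ENNReal.ofReal t < D s <;> simp [hG, hW, indicator_apply, h, hs]
      calc ∫⁻ t in T, G (t, s) ∂volume
          = ∫⁻ t in T, ({t : ℝ | ENNReal.ofReal t < D s}).indicator 1 t ∂volume := by rw [hfun]
      _ = (volume.restrict T) {t : ℝ | ENNReal.ofReal t < D s} := lintegral_indicator_one hset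
      _ = volume ({t : ℝ | ENNReal.ofReal t < D s} ∩ T) := Measure.restrict_apply hset
      _ = (Ioi (0:ℝ)).indicator (fun s => min m (D s)) s := by
          have hseteq : {t : ℝ | ENNReal.ofReal t < D s} ∩ T
              = {t : ℝ | 0 < t ∧ ENNReal.ofReal t < min m (D s)} := by
            ext t
            simp only [mem_inter_iff, mem_setOf_eq, hT, lt_min_iff]
            tauto
          rw [hseteq, volume_aux ((min_le_left m _).trans_lt hmtop.lt_top).ne]
          exact (indicator_of_mem hs (fun s => min m (D s))).symm
    · have hfun : (fun t => G (t, s)) = (fun _ => 0) := by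
        funext t
        simp [hG, hW, indicator_apply, hs]
      rw [hfun, lintegral_zero]
      exact (indicator_of_notMem hs (fun s => min m (D s))).symm
  calc ∫⁻ t in T, niRearr μ f t = ∫⁻ t in T, ∫⁻ s, G (t, s) ∂volume ∂volume := by
        exact setLIntegral_congr_fun hTm (fun t _ => step1 t)
  _ = ∫⁻ s, ∫⁻ t in T, G (t, s) ∂volume ∂volume := swap
  _ = ∫⁻ s, (Ioi (0:ℝ)).indicator (fun s => min m (D s)) s := by
        exact lintegral_congr step3
  _ = ∫⁻ s in Ioi (0:ℝ), min m (D s) := lintegral_indicator measurableSet_Ioi _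

/-- layer cake on a measurable set. -/
lemma setLIntegral_abs_eq (μ : Measure α) {f : α → ℝ} (hf : Measurable f)
    {E : Set α} (hE : MeasurableSet E) :
    ∫⁻ x in E, ENNReal.ofReal |f x| ∂μ
      = ∫⁻ s in Ioi (0:ℝ), μ ({x | s < |f x|} ∩ E) := by
  rw [lintegral_eq_lintegral_meas_lt (μ.restrict E)
    (Filter.Eventually.of_forall fun x => abs_nonneg (f x)) hf.abs.aemeasurable]
  refine setLIntegral_congr_fun measurableSet_Ioi (fun s _ => ?_)
  exact Measure.restrict_apply (measurableSet_lt measurable_const hf.abs)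

/-- lower bound: integral over a small set is at most the rearrangement integral. -/
lemma setLIntegral_abs_le (μ : Measure α) {f : α → ℝ} (hf : Measurable f)
    {E : Set α} (hE : MeasurableSet E) (hE1 : μ E ≤ 1) :
    ∫⁻ x in E, ENNReal.ofReal |f x| ∂μ
      ≤ ∫⁻ s in Ioi (0:ℝ), min (min (μ univ) 1) (distrib μ f s) := by
  rw [setLIntegral_abs_eq μ hf hE]
  refine setLIntegral_mono (measurable_const.min (distrib_measurable μ f)) fun s _ => ?_
  refine le_min (le_min ?_ ?_) ?_
  · exact measure_mono (fun x hx => mem_univ x)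
  · exact (measure_mono inter_subset_right).trans hE1
  · exact measure_mono inter_subset_left


lemma le_Aconst (μ ν : Measure α) (q : ℝ≥0∞) {E : Set α} (hE : MeasurableSet E)
    (hE1 : μ E ≤ 1) :
    eLpNorm (fun x => (μ.rnDeriv ν x).toReal) q (ν.restrict E) ≤ Aconst μ ν q :=
  le_iSup₂_of_le E hE (le_iSup_of_le hE1 le_rfl)

lemma rnDeriv_ofReal_ae (μ ν : Measure α) [SigmaFinite μ] :
    (fun x => ENNReal.ofReal ((μ.rnDeriv ν x).toReal)) =ᵐ[ν] μ.rnDeriv ν := by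
  filter_upwards [Measure.rnDeriv_lt_top μ ν] with x hx
  exact ENNReal.ofReal_toReal hx.ne

/-- Hölder bound on a set of `μ`-measure at most 1. -/
lemma holder_bound (μ ν : Measure α) [SigmaFinite μ] [SigmaFinite ν] {p q : ℝ≥0∞}
    (hp : 1 ≤ p) (hp' : p ≠ ∞) (hpq : 1/p + 1/q = 1) (hac : μ ≪ ν)
    {f : α → ℝ} (hf : Measurable f) {E : Set α} (hE : MeasurableSet E) (hE1 : μ E ≤ 1) :
    ∫⁻ x in E, ENNReal.ofReal |f x| ∂μ ≤ Aconst μ ν q * eLpNorm f p ν := by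
  classical
  set g : α → ℝ := fun x => (μ.rnDeriv ν x).toReal with hg
  have hgm : Measurable g := (Measure.measurable_rnDeriv μ ν).ennreal_toReal
  have step0 : ∫⁻ x in E, ENNReal.ofReal |f x| ∂μ
      = ∫⁻ x in E, (‖f x‖₊ : ℝ≥0∞) * (‖g x‖₊ : ℝ≥0∞) ∂ν := by
    rw [← MeasureTheory.setLIntegral_rnDeriv_mul hac
      hf.abs.ennreal_ofReal.aemeasurable hE]
    refine lintegral_congr_ae (ae_restrict_of_ae ?_)
    filter_upwards [rnDeriv_ofReal_ae μ ν] with x hx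
    rw [← hx, ← enorm_eq_nnnorm, ← enorm_eq_nnnorm, Real.enorm_eq_ofReal_abs, Real.enorm_eq_ofReal (ENNReal.toReal_nonneg)]
    ring
  rw [step0]
  rcases eq_or_lt_of_le hp with rfl | hp1
  · -- p = 1, q = ∞
    have hq : q = ∞ := by
      simp only [one_div, inv_one] at hpq
      have h0 : (1:ℝ≥0∞) + q⁻¹ = 1 + 0 := by simpa using hpq
      have := (ENNReal.add_right_inj one_ne_top).mp h0
      rwa [ENNReal.inv_eq_zero] at this
    subst hq
    have hbound : ∀ᵐ x ∂(ν.restrict E),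
        (‖f x‖₊ : ℝ≥0∞) * (‖g x‖₊ : ℝ≥0∞)
          ≤ (‖f x‖₊ : ℝ≥0∞) * eLpNorm g ∞ (ν.restrict E) := by
      filter_upwards [ae_le_eLpNormEssSup (f := g) (μ := ν.restrict E)] with x hx
      rw [eLpNorm_exponent_top]
      exact mul_le_mul_right hx _
    calc ∫⁻ x in E, (‖f x‖₊ : ℝ≥0∞) * (‖g x‖₊ : ℝ≥0∞) ∂ν
        ≤ ∫⁻ x in E, (‖f x‖₊ : ℝ≥0∞) * eLpNorm g ∞ (ν.restrict E) ∂ν :=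
          lintegral_mono_ae hbound
    _ = (∫⁻ x in E, (‖f x‖₊ : ℝ≥0∞) ∂ν) * eLpNorm g ∞ (ν.restrict E) :=
          lintegral_mul_const _ hf.enorm
    _ ≤ eLpNorm f 1 ν * Aconst μ ν ∞ := by
          refine mul_le_mul' ?_ (le_Aconst μ ν ∞ hE hE1)
          rw [eLpNorm_one_eq_lintegral_enorm]
          exact setLIntegral_le_lintegral _ _
    _ = Aconst μ ν ∞ * eLpNorm f 1 ν := mul_comm _ _
    -- note p = 1
  · -- 1 < p < ∞
    have hp0 : p ≠ 0 := (zero_lt_one.trans hp1).ne'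
    have hq0 : q ≠ 0 := by
      rintro rfl
      rw [ENNReal.div_zero one_ne_zero, add_top] at hpq
      exact ENNReal.top_ne_one hpq
    have hqtop : q ≠ ∞ := by
      rintro rfl
      rw [one_div, one_div] at hpq
      simp only [ENNReal.inv_top, add_zero] at hpq
      exact absurd (ENNReal.inv_eq_one.mp hpq) hp1.ne'
    have hfin1 : (1/p) ≠ ∞ := by
      rw [one_div]
      simpa using hp0
    have hfin2 : (1/q) ≠ ∞ := by
      rw [one_div]
      simpa using hq0
    have htr : 1/p.toReal + 1/q.toReal = 1 := by
      have := congrArg ENNReal.toReal hpq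
      rw [ENNReal.toReal_add hfin1 hfin2] at this
      simpa [one_div, ENNReal.toReal_inv] using this
    have hpr1 : 1 < p.toReal := by
      rw [← ENNReal.toReal_one]
      exact ENNReal.toReal_lt_toReal one_ne_top hp' |>.mpr hp1
    have hconj : p.toReal.HolderConjugate q.toReal := Real.holderConjugate_iff.mpr ⟨hpr1, by rw [← one_div, ← one_div]; exact htr⟩
    calc ∫⁻ x in E, (‖f x‖₊ : ℝ≥0∞) * (‖g x‖₊ : ℝ≥0∞) ∂ν
        ≤ (∫⁻ x in E, (‖f x‖₊ : ℝ≥0∞) ^ p.toReal ∂ν) ^ (1/p.toReal)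
          * (∫⁻ x in E, (‖g x‖₊ : ℝ≥0∞) ^ q.toReal ∂ν) ^ (1/q.toReal) :=
          ENNReal.lintegral_mul_le_Lp_mul_Lq _ hconj hf.enorm.aemeasurable
            hgm.enorm.aemeasurable
    _ = eLpNorm f p (ν.restrict E) * eLpNorm g q (ν.restrict E) := by
          rw [eLpNorm_eq_lintegral_rpow_enorm_toReal hp0 hp',
            eLpNorm_eq_lintegral_rpow_enorm_toReal hq0 hqtop]
          rfl
    _ ≤ Aconst μ ν q * eLpNorm f p ν := by
          rw [mul_comm]
          exact mul_le_mul' (le_Aconst μ ν q hE hE1)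
            (eLpNorm_mono_measure f Measure.restrict_le_self)

theorem embedding_main
    (μ ν : Measure α) [SigmaFinite μ] [SigmaFinite ν]
    (hμna : Nonatomic μ) (hνna : Nonatomic ν)
    (p q : ℝ≥0∞) (hp : 1 ≤ p) (hp' : p ≠ ∞) (hpq : 1 / p + 1 / q = 1)
    (hac : μ ≪ ν) (hA : Aconst μ ν q ≠ ∞) :
    (∀ f : α → ℝ, Measurable f → eLpNorm f p ν < ∞ →
      ∫⁻ t in {t : ℝ | 0 < t ∧ ENNReal.ofReal t < min (μ univ) 1}, niRearr μ f t ≤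
        Aconst μ ν q * eLpNorm f p ν) ∧
      ∀ C : ℝ≥0∞,
        (∀ f : α → ℝ, Measurable f → eLpNorm f p ν < ∞ →
          ∫⁻ t in {t : ℝ | 0 < t ∧ ENNReal.ofReal t < min (μ univ) 1}, niRearr μ f t ≤
            C * eLpNorm f p ν) →
        Aconst μ ν q ≤ C := by
  classical
  have hm1 : min (μ univ) 1 ≤ 1 := min_le_right _ _
  have hmtop : min (μ univ) 1 ≠ ∞ := (hm1.trans_lt one_lt_top).ne
  constructor
  · -- forward embedding
    intro f hf hLp
    rw [lintegral_niRearr_eq μ f]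
    set m := min (μ univ) 1 with hm
    set D := distrib μ f with hD
    by_cases hm0 : m = 0
    · have : ∀ s ∈ Ioi (0:ℝ), min m (D s) = 0 := fun s _ => by simp [hm0]
      rw [setLIntegral_congr_fun measurableSet_Ioi this]
      simp
    by_cases hB : ∃ s : ℝ, 0 < s ∧ D s ≤ m
    · -- main case
      obtain ⟨s₀, hs₀, hDs₀⟩ := hB
      set U : Set ℝ := {s | 0 < s ∧ D s ≤ m} with hU
      have hUne : U.Nonempty := ⟨s₀, hs₀, hDs₀⟩
      have hbdd : BddBelow U := ⟨0, fun s hs => hs.1.le⟩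
      set c := sInf U with hc
      have hc0 : 0 ≤ c := le_csInf hUne fun s hs => hs.1.le
      have hc1 : ∀ s : ℝ, c < s → D s ≤ m := by
        intro s hs
        obtain ⟨u, hu, hus⟩ := (csInf_lt_iff hbdd hUne).mp hs
        exact (distrib_antitone μ f hus.le).trans hu.2
      have hc2 : ∀ s : ℝ, 0 < s → s < c → m < D s := by
        intro s hs hsc
        have : s ∉ U := notMem_of_lt_csInf hsc hbdd
        by_contra hcon
        push_neg at hcon
        exact this ⟨hs, hcon⟩
      set H : Set α := {x | c < |f x|} with hH
      have hHmeas : MeasurableSet H := measurableSet_lt measurable_const hf.abs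
      have hHm : μ H ≤ m := by
        have hcover : H = ⋃ n : ℕ, {x | c + 1/(n+1) < |f x|} := by
          ext x
          simp only [hH, mem_setOf_eq, mem_iUnion]
          constructor
          · intro hx
            obtain ⟨n, hn⟩ := exists_nat_one_div_lt (sub_pos.mpr hx)
            exact ⟨n, by push_cast at hn ⊢; linarith⟩
          · rintro ⟨n, hn⟩
            have : (0:ℝ) < 1/(n+1) := by positivity
            linarith
        rw [hcover, Directed.measure_iUnion]
        · refine iSup_le fun n => ?_
          have : (0:ℝ) < 1/(n+1) := by positivity
          exact hc1 _ (by linarith)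
        · refine Monotone.directed_le fun i j hij => ?_
          intro x hx
          simp only [mem_setOf_eq] at hx ⊢
          have h1 : (1:ℝ)/(j+1) ≤ 1/(i+1) := by
            apply one_div_le_one_div_of_le (by positivity)
            exact_mod_cast by omega
          linarith
      -- epsilon argument
      refine ENNReal.le_of_forall_pos_le_add fun ε hε _ => ?_
      set b : ℝ := if c = 0 then -1 else c - min (ε:ℝ) (c/2) with hb
      have hεR : (0:ℝ) < ε := hε
      have hbc : b < c := by
        rcases eq_or_ne c 0 with h | h
        · rw [hb, if_pos h, h]; norm_num
        · have hcpos : 0 < c := lt_of_le_of_ne hc0 (Ne.symm h)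
          simp only [hb, if_neg h]
          have : (0:ℝ) < min (ε:ℝ) (c/2) := lt_min hεR (by linarith)
          linarith
      set K : Set α := {x | b < |f x|} with hK
      have hKmeas : MeasurableSet K := measurableSet_lt measurable_const hf.abs
      have hKge : m ≤ μ K := by
        rcases eq_or_ne c 0 with h | h
        · have : K = univ := by
            ext x
            simp only [hK, mem_setOf_eq, mem_univ, iff_true, hb, if_pos h]
            have := abs_nonneg (f x); linarith
          rw [this]
          exact (min_le_left _ _).trans le_rfl
        · have hcpos : 0 < c := lt_of_le_of_ne hc0 (Ne.symm h)
          have hbpos : 0 < b := by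
            simp only [hb, if_neg h]
            have : min (ε:ℝ) (c/2) ≤ c/2 := min_le_right _ _
            linarith
          exact (hc2 b hbpos hbc).le
      have hHK : H ⊆ K := fun x hx => lt_trans hbc hx
      -- choose F by Sierpinski
      have hsub : m - μ H ≤ μ (K \ H) := by
        rw [tsub_le_iff_right]
        calc m ≤ μ K := hKge
        _ ≤ μ ((K \ H) ∪ H) := measure_mono (by
            intro x hx
            by_cases hxH : x ∈ H
            · exact Or.inr hxH
            · exact Or.inl ⟨hx, hxH⟩)
        _ ≤ μ (K \ H) + μ H := measure_union_le _ _
      obtain ⟨F, hFsub, hFmeas, hFm⟩ :=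
        hμna.exists_subset_measure_eq (hKmeas.diff hHmeas) hsub
      set E := H ∪ F with hE
      have hEmeas : MeasurableSet E := hHmeas.union hFmeas
      have hEm : μ E = m := by
        rw [hE, measure_union (disjoint_sdiff_right.mono_right hFsub) hFmeas, hFm,
          add_tsub_cancel_of_le hHm]
      have hE1 : μ E ≤ 1 := hEm.le.trans hm1
      have hEK : E ⊆ K := union_subset hHK (hFsub.trans diff_subset)
      -- pointwise bound off the excluded interval
      set S2 : Set ℝ := Ioc b c ∩ Ioi 0 with hS2
      have hS2meas : MeasurableSet S2 := measurableSet_Ioc.inter measurableSet_Ioi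
      have hpt : ∀ s ∈ Ioi (0:ℝ) \ S2, min m (D s) ≤ μ ({x | s < |f x|} ∩ E) := by
        rintro s ⟨hs, hsno⟩
        rcases lt_or_ge c s with hcs | hsc
        · have hsubE : {x | s < |f x|} ⊆ E := fun x hx =>
            Or.inl (lt_trans hcs hx)
          rw [inter_eq_left.mpr (fun x hx => (hsubE hx))]
          exact min_le_right m (D s)
        · have hsb : s ≤ b := by
            by_contra hcon
            push_neg at hcon
            exact hsno ⟨⟨hcon, hsc⟩, hs⟩
          have hsubE : E ⊆ {x | s < |f x|} := fun x hx =>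
            lt_of_le_of_lt hsb (hEK hx)
          rw [inter_eq_right.mpr hsubE, hEm]
          exact min_le_left _ _
      have hfeq : (fun s => μ ({x | s < |f x|} ∩ E)) = distrib (μ.restrict E) f := by
        funext s
        rw [distrib, Measure.restrict_apply (measurableSet_lt measurable_const hf.abs)]
      have hsplit : ∫⁻ s in Ioi (0:ℝ), min m (D s)
          ≤ (∫⁻ s in Ioi (0:ℝ) \ S2, min m (D s)) + ∫⁻ s in S2, min m (D s) := by
        rw [← lintegral_union hS2meas disjoint_sdiff_left]
        refine lintegral_mono_set fun s hs => ?_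
        by_cases h : s ∈ S2
        · exact Or.inr h
        · exact Or.inl ⟨hs, h⟩
      refine hsplit.trans (add_le_add ?_ ?_)
      · calc ∫⁻ s in Ioi (0:ℝ) \ S2, min m (D s)
            ≤ ∫⁻ s in Ioi (0:ℝ) \ S2, μ ({x | s < |f x|} ∩ E) :=
              setLIntegral_mono (hfeq ▸ distrib_measurable (μ.restrict E) f) hpt
        _ ≤ ∫⁻ s in Ioi (0:ℝ), μ ({x | s < |f x|} ∩ E) := lintegral_mono_set diff_subset
        _ = ∫⁻ x in E, ENNReal.ofReal |f x| ∂μ := (setLIntegral_abs_eq μ hf hEmeas).symm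
        _ ≤ Aconst μ ν q * eLpNorm f p ν := holder_bound μ ν hp hp' hpq hac hf hEmeas hE1
      · have hvol : volume S2 ≤ (ε : ℝ≥0∞) := by
          rcases eq_or_ne c 0 with h | h
          · have : S2 = ∅ := by
              rw [hS2]
              ext s
              simp only [mem_inter_iff, mem_Ioc, mem_Ioi, mem_empty_iff_false, iff_false]
              rintro ⟨⟨h1, h2⟩, h3⟩
              rw [h] at h2
              linarith
            simp [this]
          · have hcb : c - b = min (ε:ℝ) (c/2) := by
              rw [hb, if_neg h]; ring
            calc volume S2 ≤ volume (Ioc b c) := measure_mono inter_subset_left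
            _ = ENNReal.ofReal (c - b) := Real.volume_Ioc
            _ ≤ ENNReal.ofReal (ε:ℝ) := ENNReal.ofReal_le_ofReal (hcb ▸ min_le_left _ _)
            _ = (ε : ℝ≥0∞) := ENNReal.ofReal_coe_nnreal
        calc ∫⁻ s in S2, min m (D s) ≤ ∫⁻ _ in S2, 1 :=
              setLIntegral_mono measurable_one fun s _ => le_trans (min_le_left _ _) hm1
        _ = volume S2 := setLIntegral_one _
        _ ≤ (ε : ℝ≥0∞) := hvol
    · -- degenerate case: distribution always above m
      push_neg at hB
      have hRtop : Aconst μ ν q * eLpNorm f p ν = ∞ := by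
        have hstep : ∀ n : ℕ, (n : ℝ≥0∞) * m ≤ Aconst μ ν q * eLpNorm f p ν := by
          intro n
          rcases Nat.eq_zero_or_pos n with rfl | hn
          · simp
          have hnpos : (0:ℝ) < n := by exact_mod_cast hn
          have hBn : m ≤ μ {x | (n:ℝ) < |f x|} := (hB n hnpos).le
          obtain ⟨En, hEnsub, hEnmeas, hEnm⟩ :=
            hμna.exists_subset_measure_eq (measurableSet_lt measurable_const hf.abs) hBn
          calc (n : ℝ≥0∞) * m = ∫⁻ _ in En, (n : ℝ≥0∞) ∂μ := by
                rw [setLIntegral_const, hEnm, mul_comm]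
          _ ≤ ∫⁻ x in En, ENNReal.ofReal |f x| ∂μ := by
                refine setLIntegral_mono hf.abs.ennreal_ofReal fun x hx => ?_
                have := hEnsub hx
                simp only [mem_setOf_eq] at this
                calc (n : ℝ≥0∞) = ENNReal.ofReal n := (ENNReal.ofReal_natCast n).symm
                _ ≤ ENNReal.ofReal |f x| := ENNReal.ofReal_le_ofReal this.le
          _ ≤ Aconst μ ν q * eLpNorm f p ν :=
                holder_bound μ ν hp hp' hpq hac hf hEnmeas (hEnm.le.trans hm1)
        by_contra hcon
        have hfin : Aconst μ ν q * eLpNorm f p ν ≠ ∞ := hcon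
        obtain ⟨n, hn⟩ := ENNReal.exists_nat_gt
          (ENNReal.div_lt_top hfin hm0).ne
        have := hstep n
        rw [← ENNReal.le_div_iff_mul_le (Or.inl hm0) (Or.inl hmtop)] at this
        exact absurd this (not_le.mpr hn)
      rw [hRtop]
      exact le_top
  · -- optimality
    intro C hC
    refine iSup_le fun E => iSup_le fun hE => iSup_le fun hE1 => ?_
    set g : α → ℝ := fun x => (μ.rnDeriv ν x).toReal with hg
    have hgm : Measurable g := (Measure.measurable_rnDeriv μ ν).ennreal_toReal
    rcases eq_or_lt_of_le hp with rfl | hp1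
    · -- p = 1, q = ∞
      have hq : q = ∞ := by
        simp only [one_div, inv_one] at hpq
        have h0 : (1:ℝ≥0∞) + q⁻¹ = 1 + 0 := by simpa using hpq
        have := (ENNReal.add_right_inj one_ne_top).mp h0
        rwa [ENNReal.inv_eq_zero] at this
      subst hq
      by_contra hcon
      push_neg at hcon
      obtain ⟨b, hCb, hbe⟩ := exists_between hcon
      have hbtop : b ≠ ∞ := fun h => absurd (h ▸ hbe) (not_lt.mpr le_top)
      set S : Set α := E ∩ {x | b < ENNReal.ofReal (g x)} with hS
      have hgE : Measurable fun x => ENNReal.ofReal (g x) := hgm.ennreal_ofReal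
      have hSmeas : MeasurableSet S := hE.inter (hgE measurableSet_Ioi)
      have hS0 : 0 < ν S := by
        by_contra hc
        push_neg at hc
        have hc0 : ν S = 0 := le_antisymm (by simpa using hc) zero_le
        have hae : ∀ᵐ x ∂ν, x ∉ S := measure_eq_zero_iff_ae_notMem.mp hc0
        have hle : eLpNorm g ∞ (ν.restrict E) ≤ b := by
          rw [eLpNorm_exponent_top, eLpNormEssSup]
          refine essSup_le_of_ae_le _ ((ae_restrict_iff' hE).mpr ?_)
          filter_upwards [hae] with x hx hxE
          by_contra hcon2
          push_neg at hcon2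
          exact hx ⟨hxE, by
            rwa [Real.enorm_eq_ofReal (ENNReal.toReal_nonneg : (0:ℝ) ≤ g x)] at hcon2⟩
        exact absurd (hbe.trans_le hle) (lt_irrefl b)
      obtain ⟨S', hS'meas, hS'sub, hS'0, hS'fin⟩ :=
        Measure.exists_subset_measure_lt_top hSmeas hS0
      set f : α → ℝ := S'.indicator (fun _ => (1:ℝ)) with hf
      have hfm : Measurable f := measurable_const.indicator hS'meas
      have hnorm : (fun x => (‖f x‖₊ : ℝ≥0∞)) = S'.indicator 1 := by
        funext x
        by_cases hx : x ∈ S' <;> simp [hf, hx, indicator_apply]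
      have hL1 : eLpNorm f 1 ν = ν S' := by
        rw [eLpNorm_one_eq_lintegral_enorm]; simp only [enorm_eq_nnnorm]; rw [hnorm, lintegral_indicator_one hS'meas]
      have hLp : eLpNorm f 1 ν < ∞ := by rw [hL1]; exact hS'fin
      have hineq := hC f hfm hLp
      rw [hL1] at hineq
      -- lower bound on the rearrangement integral
      have hμS'le : μ S' ≤ min (μ univ) 1 := by
        refine le_min (measure_mono (subset_univ _)) ?_
        exact le_trans (measure_mono (hS'sub.trans inter_subset_left)) hE1
      have hlow : μ S' ≤ ∫⁻ t in {t : ℝ | 0 < t ∧ ENNReal.ofReal t < min (μ univ) 1},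
          niRearr μ f t := by
        rw [lintegral_niRearr_eq μ f]
        calc μ S' = ∫⁻ _ in Ioo (0:ℝ) 1, μ S' := by
              rw [setLIntegral_const, Real.volume_Ioo]
              simp
        _ ≤ ∫⁻ s in Ioo (0:ℝ) 1, min (min (μ univ) 1) (distrib μ f s) := by
              refine setLIntegral_mono (measurable_const.min (distrib_measurable μ f))
                fun s hs => ?_
              refine le_min hμS'le ?_
              refine measure_mono fun x hx => ?_
              simp only [mem_setOf_eq]
              have : f x = 1 := indicator_of_mem hx _
              rw [this, abs_one]
              exact hs.2
        _ ≤ ∫⁻ s in Ioi (0:ℝ), min (min (μ univ) 1) (distrib μ f s) :=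
              lintegral_mono_set Ioo_subset_Ioi_self
      -- lower bound μ S' ≥ b * ν S'
      have hbS' : b * ν S' ≤ μ S' := by
        rw [← Measure.setLIntegral_rnDeriv hac S']
        calc b * ν S' = ∫⁻ _ in S', b ∂ν := by rw [setLIntegral_const, mul_comm]
        _ ≤ ∫⁻ x in S', μ.rnDeriv ν x ∂ν := by
              refine setLIntegral_mono (Measure.measurable_rnDeriv μ ν) fun x hx => ?_
              have hxS := hS'sub hx
              have h1 : b < ENNReal.ofReal (g x) := hxS.2
              exact h1.le.trans (ENNReal.ofReal_toReal_le)
      have hfinal : b * ν S' ≤ C * ν S' := le_trans hbS' (le_trans hlow hineq)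
      rw [ENNReal.mul_le_mul_iff_left hS'0.ne' hS'fin.ne] at hfinal
      exact absurd (hCb.trans_le hfinal) (lt_irrefl C)
    · -- 1 < p < ∞
      have hp0 : p ≠ 0 := (zero_lt_one.trans hp1).ne'
      have hq0 : q ≠ 0 := by
        rintro rfl
        rw [ENNReal.div_zero one_ne_zero, add_top] at hpq
        exact ENNReal.top_ne_one hpq
      have hqtop : q ≠ ∞ := by
        rintro rfl
        rw [one_div, one_div] at hpq
        simp only [ENNReal.inv_top, add_zero] at hpq
        exact absurd (ENNReal.inv_eq_one.mp hpq) hp1.ne'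
      have hfin1 : (1/p) ≠ ∞ := by rw [one_div]; simpa using hp0
      have hfin2 : (1/q) ≠ ∞ := by rw [one_div]; simpa using hq0
      have htr : 1/p.toReal + 1/q.toReal = 1 := by
        have := congrArg ENNReal.toReal hpq
        rw [ENNReal.toReal_add hfin1 hfin2] at this
        simpa [one_div, ENNReal.toReal_inv] using this
      have hpr1 : 1 < p.toReal := by
        rw [← ENNReal.toReal_one]
        exact ENNReal.toReal_lt_toReal one_ne_top hp' |>.mpr hp1
      have hpr0 : 0 < p.toReal := by linarith
      have hqr0 : 0 < q.toReal := ENNReal.toReal_pos hq0 hqtop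
      have hqr1 : 1 < q.toReal := by
        have h2 : 1/q.toReal < 1 := by
          have : 0 < 1/p.toReal := by positivity
          linarith
        rwa [div_lt_one hqr0] at h2
      set I := eLpNorm g q (ν.restrict E) with hI
      have hIA : I ≤ Aconst μ ν q := le_Aconst μ ν q hE hE1
      have hIfin : I < ∞ := lt_of_le_of_lt hIA hA.lt_top
      rcases eq_or_ne I 0 with hI0 | hI0
      · rw [hI0]; exact zero_le
      set J := ∫⁻ x in E, (‖g x‖₊ : ℝ≥0∞) ^ q.toReal ∂ν with hJ
      have hIJ : I = J ^ (1/q.toReal) := by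
        rw [hI, eLpNorm_eq_lintegral_rpow_enorm_toReal hq0 hqtop]
        rfl
      have hJ0 : J ≠ 0 := by
        intro h
        rw [h, ENNReal.zero_rpow_of_pos (by positivity)] at hIJ
        exact hI0 hIJ
      have hJtop : J ≠ ∞ := by
        intro h
        rw [h, ENNReal.top_rpow_of_pos (by positivity)] at hIJ
        exact hIfin.ne hIJ
      -- test function
      set f : α → ℝ := E.indicator (fun x => g x ^ (q.toReal - 1)) with hf
      have hfm : Measurable f := (hgm.pow_const _).indicator hE
      have hqr1' : (0:ℝ) ≤ q.toReal - 1 := by linarith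
      have hgnn : ∀ x, 0 ≤ g x := fun x => ENNReal.toReal_nonneg
      have hnorm : ∀ x, (‖f x‖₊ : ℝ≥0∞)
          = E.indicator (fun x => (‖g x‖₊ : ℝ≥0∞) ^ (q.toReal - 1)) x := by
        intro x
        by_cases hx : x ∈ E
        · rw [hf]
          simp only [indicator_of_mem hx]
          rw [← enorm_eq_nnnorm, ← enorm_eq_nnnorm, Real.enorm_eq_ofReal (Real.rpow_nonneg (hgnn x) _),
            Real.enorm_eq_ofReal (hgnn x)]
          exact (ENNReal.ofReal_rpow_of_nonneg (hgnn x) hqr1').symm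
        · rw [hf]
          simp [indicator_of_notMem hx]
      have hprqr : (q.toReal - 1) * p.toReal = q.toReal := by
        have h1 : q.toReal + p.toReal = p.toReal * q.toReal := by
          field_simp at htr
          linarith
        ring_nf
        nlinarith [h1]
      have hLpf : eLpNorm f p ν = J ^ (1/p.toReal) := by
        rw [eLpNorm_eq_lintegral_rpow_enorm_toReal hp0 hp']
        congr 1
        calc ∫⁻ x, (‖f x‖₊ : ℝ≥0∞) ^ p.toReal ∂ν
            = ∫⁻ x, E.indicator (fun x => (‖g x‖₊ : ℝ≥0∞) ^ q.toReal) x ∂ν := by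
              refine lintegral_congr fun x => ?_
              rw [hnorm x]
              by_cases hx : x ∈ E
              · rw [indicator_of_mem hx, indicator_of_mem hx, ← ENNReal.rpow_mul, hprqr]
              · rw [indicator_of_notMem hx, indicator_of_notMem hx,
                  ENNReal.zero_rpow_of_pos hpr0]
        _ = J := by rw [lintegral_indicator hE, hJ]
      have hLpfin : eLpNorm f p ν < ∞ := by
        rw [hLpf]
        exact ENNReal.rpow_lt_top_of_nonneg (by positivity) hJtop
      have hineq := hC f hfm hLpfin
      rw [hLpf] at hineq
      -- identify the lower bound with J
      have hJeq : J = ∫⁻ x in E, ENNReal.ofReal |f x| ∂μ := by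
        have h1 : ∫⁻ x in E, ENNReal.ofReal |f x| ∂μ
            = ∫⁻ x in E, ENNReal.ofReal (g x ^ (q.toReal - 1)) ∂μ := by
          refine setLIntegral_congr_fun hE (fun x hx => ?_)
          rw [hf]
          simp only [indicator_of_mem hx]
          rw [abs_of_nonneg (Real.rpow_nonneg (hgnn x) _)]
        have h2 : ∫⁻ x in E, ENNReal.ofReal (g x ^ (q.toReal - 1)) ∂μ
            = ∫⁻ x in E, μ.rnDeriv ν x * ENNReal.ofReal (g x ^ (q.toReal - 1)) ∂ν :=
          (MeasureTheory.setLIntegral_rnDeriv_mul hac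
            ((hgm.pow_const _).ennreal_ofReal).aemeasurable hE).symm
        have h3 : ∫⁻ x in E, μ.rnDeriv ν x * ENNReal.ofReal (g x ^ (q.toReal - 1)) ∂ν
            = ∫⁻ x in E, (‖g x‖₊ : ℝ≥0∞) ^ q.toReal ∂ν := by
          refine lintegral_congr_ae (ae_restrict_of_ae ?_)
          filter_upwards [rnDeriv_ofReal_ae μ ν] with x hx
          rw [← hx]
          rw [← enorm_eq_nnnorm, Real.enorm_eq_ofReal (hgnn x),
            ← ENNReal.ofReal_rpow_of_nonneg (hgnn x) hqr1']
          set a := ENNReal.ofReal (g x) with ha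
          have hatop : a ≠ ∞ := ENNReal.ofReal_ne_top
          rcases eq_or_ne a 0 with h0 | h0
          · rw [h0, ENNReal.zero_rpow_of_pos (by linarith),
              ENNReal.zero_rpow_of_pos (by linarith), mul_zero]
          · calc a * a ^ (q.toReal - 1) = a ^ (1:ℝ) * a ^ (q.toReal - 1) := by
                  rw [ENNReal.rpow_one]
            _ = a ^ (1 + (q.toReal - 1)) := (ENNReal.rpow_add _ _ h0 hatop).symm
            _ = a ^ q.toReal := by ring_nf
        rw [h1, h2, h3, hJ]
      have hlow : J ≤ ∫⁻ t in {t : ℝ | 0 < t ∧ ENNReal.ofReal t < min (μ univ) 1},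
          niRearr μ f t := by
        rw [lintegral_niRearr_eq μ f, hJeq]
        exact setLIntegral_abs_le μ hfm hE hE1
      have hfinal : J ≤ C * J ^ (1/p.toReal) := le_trans hlow hineq
      have hsplit : J = J ^ (1/p.toReal) * J ^ (1/q.toReal) := by
        rw [← ENNReal.rpow_add _ _ hJ0 hJtop, htr, ENNReal.rpow_one]
      have hpow0 : J ^ (1/p.toReal) ≠ 0 := by
        simp [ENNReal.rpow_eq_zero_iff, hJ0, hJtop]
      have hpowtop : J ^ (1/p.toReal) ≠ ∞ :=
        (ENNReal.rpow_lt_top_of_nonneg (by positivity) hJtop).ne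
      have h5 : J ^ (1/p.toReal) * J ^ (1/q.toReal) ≤ J ^ (1/p.toReal) * C := by
        calc J ^ (1/p.toReal) * J ^ (1/q.toReal) = J := hsplit.symm
        _ ≤ C * J ^ (1/p.toReal) := hfinal
        _ = J ^ (1/p.toReal) * C := mul_comm _ _
      rw [ENNReal.mul_le_mul_iff_right hpow0 hpowtop] at h5
      rw [hIJ]
      exact h5

/-- If `μ ≪ ν` and `A = sup_{μ(E) ≤ 1} ‖dμ/dν‖_{L^{p'}(E, ν)} < ∞`, then
`L^p(R, ν) ↪ (L^1 + L^∞)(R, μ)` with norm at most `A`; moreover `A` is the optimal constant. -/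
theorem embedding_of_absolutelyContinuous_and_Aconst
    (μ ν : Measure α) [SigmaFinite μ] [SigmaFinite ν]
    (hμna : Nonatomic μ) (hνna : Nonatomic ν)
    (p q : ℝ≥0∞) (hp : 1 ≤ p) (hp' : p ≠ ∞) (hpq : 1 / p + 1 / q = 1)
    (hac : μ ≪ ν) (hA : Aconst μ ν q ≠ ∞) :
    (∀ f : α → ℝ, Measurable f → eLpNorm f p ν < ∞ →
      ∫⁻ t in {t : ℝ | 0 < t ∧ ENNReal.ofReal t < min (μ univ) 1}, niRearr μ f t ≤
        Aconst μ ν q * eLpNorm f p ν) ∧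
      ∀ C : ℝ≥0∞,
        (∀ f : α → ℝ, Measurable f → eLpNorm f p ν < ∞ →
          ∫⁻ t in {t : ℝ | 0 < t ∧ ENNReal.ofReal t < min (μ univ) 1}, niRearr μ f t ≤
            C * eLpNorm f p ν) →
        Aconst μ ν q ≤ C := by
  exact embedding_main μ ν hμna hνna p q hp hp' hpq hac hA
end
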